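/- Let G be a finite group and N a normal subgroup of G such that for every prime-power element x of G, the cyclic subgroup ⟨x⟩ is subnormal in ⟨x⟩·N. Then every Sylow subgroup P of G is subnormal in P·N. -/

import Mathlib

open Subgroup Pointwise

/-- `H` is a normal subgroup of `K` (both viewed as subgroups of the ambient group `G`). -/
def NormalIn {G : Type*} [Group G] (H K : Subgroup G) : Prop :=
  H ≤ K ∧ ∀ k ∈ K, ∀ h ∈ H, k * h * k⁻¹ ∈ H

/-- `H` is subnormal in `K`: there is a chain `H = c 0 ⊴ c 1 ⊴ ... ⊴ c n = K`. -/
def SubnormalIn {G : Type*} [Group G] (H K : Subgroup G) : Prop :=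
  ∃ (n : ℕ) (c : ℕ → Subgroup G), c 0 = H ∧ c n = K ∧ ∀ i < n, NormalIn (c i) (c (i + 1))

/-- The hypercenter: the limit of the upper central series. -/
def hypercenter (G : Type*) [Group G] : Subgroup G := ⨆ n, _root_.upperCentralSeries G n

/-- The nilpotent residual: the intersection of all normal subgroups with nilpotent quotient. -/
def nilpotentResidual (G : Type*) [Group G] : Subgroup G :=
  ⨅ N ∈ {N : Subgroup G |
    ∃ h : N.Normal, @Group.IsNilpotent (G ⧸ N) (@QuotientGroup.Quotient.group G _ N h)}, N

/-- The Fitting subgroup: the join of all normal nilpotent subgroups. -/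
def fitting (G : Type*) [Group G] : Subgroup G :=
  ⨆ N ∈ {N : Subgroup G | N.Normal ∧ Group.IsNilpotent N}, N

/-- `N` is a minimal normal subgroup. -/
def IsMinimalNormal {G : Type*} [Group G] (N : Subgroup G) : Prop :=
  N.Normal ∧ N ≠ ⊥ ∧ ∀ K : Subgroup G, K.Normal → K ≤ N → K = ⊥ ∨ K = N

/-- The socle: the join of all minimal normal subgroups. -/
def socle (G : Type*) [Group G] : Subgroup G :=
  ⨆ N ∈ {N : Subgroup G | IsMinimalNormal N}, N

/-- A group is supersolvable if it has a chain of normal subgroups with cyclic factors. -/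
def IsSupersolvable (G : Type*) [Group G] : Prop :=
  ∃ (n : ℕ) (c : ℕ → Subgroup G), c 0 = ⊥ ∧ c n = ⊤ ∧ (∀ i, (c i).Normal) ∧
    ∀ i < n, c i ≤ c (i + 1) ∧ ∃ g : G, c (i + 1) = c i ⊔ Subgroup.zpowers g

/-- A subgroup `H` is pronormal if `H` and each conjugate `H^g` are conjugate in their join. -/
def Pronormal {G : Type*} [Group G] (H : Subgroup G) : Prop :=
  ∀ g : G, ∃ x ∈ H ⊔ H.map (MulAut.conj g).toMonoidHom,
    H.map (MulAut.conj g).toMonoidHom = H.map (MulAut.conj x).toMonoidHom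

/-- A subgroup `H` is abnormal if `g ∈ ⟨H, H^g⟩` for all `g`. -/
def Abnormal {G : Type*} [Group G] (H : Subgroup G) : Prop :=
  ∀ g : G, g ∈ H ⊔ H.map (MulAut.conj g).toMonoidHom

/-- `Δ(G)`: the intersection of all abnormal maximal subgroups. -/
def abnormalDelta (G : Type*) [Group G] : Subgroup G :=
  ⨅ M ∈ {M : Subgroup G | IsCoatom M ∧ Abnormal M}, M

/-- The generalized Fitting subgroup `F̃(G)`: the preimage of `Soc(G/Φ(G))` in `G`. -/
def genFitting (G : Type*) [Group G] : Subgroup G :=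
  (socle (G ⧸ frattini G)).comap (QuotientGroup.mk' (frattini G))

/-- A group is `p`-decomposable if every `p`-element commutes with every `p'`-element. -/
def IsPDecomposable (p : ℕ) (K : Type*) [Group K] : Prop :=
  ∀ a b : K, (∃ n, orderOf a = p ^ n) → Nat.Coprime (orderOf b) p → Commute a b

section Aux
variable {G : Type*} [Group G]

lemma normalIn_refl (H : Subgroup G) : NormalIn H H :=
  ⟨le_rfl, fun k hk h hh => by
    exact mul_mem (mul_mem hk hh) (inv_mem hk)⟩

lemma subnormalIn_of_normalIn {H K : Subgroup G} (h : NormalIn H K) : SubnormalIn H K := by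
  refine ⟨1, fun i => if i = 0 then H else K, by simp, by simp, ?_⟩
  intro i hi
  interval_cases i
  simpa using h

lemma subnormalIn_trans {H K L : Subgroup G} (h1 : SubnormalIn H K) (h2 : SubnormalIn K L) :
    SubnormalIn H L := by
  obtain ⟨n, c, hc0, hcn, hc⟩ := h1
  obtain ⟨m, d, hd0, hdm, hd⟩ := h2
  refine ⟨n + m, fun i => if i < n then c i else d (i - n), ?_, ?_, ?_⟩
  · rcases Nat.eq_zero_or_pos n with h | h
    · simp [h, hd0, ← hcn, h, hc0]
    · simp [h, hc0]
  · have : ¬ (n + m < n) := by omega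
    simp [this, hdm]
  · intro i hi
    rcases lt_trichotomy (i+1) n with h | h | h
    · have : i < n := by omega
      simpa [this, h] using hc i this
    · have hi' : i < n := by omega
      have : d ((i+1) - n) = c (i+1) := by
        rw [h]; simp [hd0, ← hcn]
      simp only [hi', if_pos, if_neg (lt_irrefl n), h ▸ (lt_irrefl n)]
      rw [if_neg (by omega : ¬ (i+1 < n)), this]
      exact hc i hi'
    · have h1' : ¬ (i < n) := by omega
      have h2' : ¬ (i + 1 < n) := by omega
      simp only [if_neg h1', if_neg h2']
      have : i - n + 1 = i + 1 - n := by omega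
      rw [← this]
      exact hd (i - n) (by omega)

lemma subnormalIn_map {G' : Type*} [Group G'] (f : G →* G') {A B : Subgroup G}
    (h : SubnormalIn A B) : SubnormalIn (A.map f) (B.map f) := by
  obtain ⟨n, c, hc0, hcn, hc⟩ := h
  refine ⟨n, fun i => (c i).map f, by simp [hc0], by simp [hcn], ?_⟩
  intro i hi
  obtain ⟨hle, hconj⟩ := hc i hi
  refine ⟨Subgroup.map_mono hle, ?_⟩
  rintro k ⟨k', hk', rfl⟩ h' ⟨h'', hh'', rfl⟩
  exact ⟨k' * h'' * k'⁻¹, hconj k' hk' h'' hh'', by simp⟩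

lemma subnormalIn_comap {G' : Type*} [Group G'] (f : G' →* G) {A B : Subgroup G}
    (h : SubnormalIn A B) : SubnormalIn (A.comap f) (B.comap f) := by
  obtain ⟨n, c, hc0, hcn, hc⟩ := h
  refine ⟨n, fun i => (c i).comap f, by simp [hc0], by simp [hcn], ?_⟩
  intro i hi
  obtain ⟨hle, hconj⟩ := hc i hi
  refine ⟨Subgroup.comap_mono hle, ?_⟩
  intro k hk h' hh'
  simp only [Subgroup.mem_comap, map_mul, map_inv] at *
  exact hconj _ hk _ hh'

lemma subnormalIn_top_of_nilpotent {K : Type*} [Group K] (hK : Group.IsNilpotent K)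
    (A : Subgroup K) : SubnormalIn A ⊤ := by
  obtain ⟨n, hn⟩ := hK.nilpotent'
  refine ⟨n, fun i => A ⊔ Subgroup.upperCentralSeries K i, by simp [Subgroup.upperCentralSeries_zero], by simp [hn], ?_⟩
  intro i _
  set S := A ⊔ Subgroup.upperCentralSeries K i with hS
  have hfwdA : ∀ a ∈ A, ∀ h ∈ S, a * h * a⁻¹ ∈ S := by
    intro a ha h hh
    have : h ∈ (A : Set K) * (Subgroup.upperCentralSeries K i : Set K) := by
      rw [← Subgroup.mul_normal]; exact hh
    obtain ⟨b, hb, z, hz, rfl⟩ := this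
    have : a * (b * z) * a⁻¹ = (a * b * a⁻¹) * (a * z * a⁻¹) := by group
    rw [this]
    exact mul_mem (le_sup_left (a := A) (mul_mem (mul_mem ha hb) (inv_mem ha)))
      (le_sup_right (b := Subgroup.upperCentralSeries K i)
        ((inferInstance : (Subgroup.upperCentralSeries K i).Normal).conj_mem z hz a))
  have hfwdZ : ∀ z ∈ Subgroup.upperCentralSeries K (i+1), ∀ h ∈ S, z * h * z⁻¹ ∈ S := by
    intro z hz h hh
    have hcomm : z * h * z⁻¹ * h⁻¹ ∈ Subgroup.upperCentralSeries K i :=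
      Subgroup.mem_upperCentralSeries_succ_iff.mp hz h
    have : z * h * z⁻¹ = (z * h * z⁻¹ * h⁻¹) * h := by group
    rw [this]
    exact mul_mem (le_sup_right (b := Subgroup.upperCentralSeries K i) hcomm) hh
  have hnorm : A ⊔ Subgroup.upperCentralSeries K (i+1) ≤ Subgroup.normalizer (S : Set K) := by
    refine sup_le ?_ ?_
    · intro a ha
      rw [Subgroup.mem_normalizer_iff]
      intro h
      constructor
      · exact fun hh => hfwdA a ha h hh
      · intro hh
        have := hfwdA a⁻¹ (inv_mem ha) _ hh
        have he : a⁻¹ * (a * h * a⁻¹) * a⁻¹⁻¹ = h := by group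
        rwa [he] at this
    · intro z hz
      rw [Subgroup.mem_normalizer_iff]
      intro h
      constructor
      · exact fun hh => hfwdZ z hz h hh
      · intro hh
        have := hfwdZ z⁻¹ (inv_mem hz) _ hh
        have he : z⁻¹ * (z * h * z⁻¹) * z⁻¹⁻¹ = h := by group
        rwa [he] at this
  refine ⟨sup_le_sup_left (Subgroup.upperCentralSeries_mono K (Nat.le_succ i)) A, ?_⟩
  intro k hk h hh
  exact (Subgroup.mem_normalizer_iff.mp (hnorm hk) h).mp hh

end Aux

section PCore
variable {G : Type*} [Group G] [Finite G] {p : ℕ} [Fact p.Prime]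

lemma conj_mem_of_normalIn {W M : Subgroup G} (hW : NormalIn W M) {m : G} (hm : m ∈ M) :
    W.map (MulAut.conj m).toMonoidHom ≤ W := by
  rintro _ ⟨w, hw, rfl⟩
  exact hW.2 m hm w hw

lemma le_normalizer_of_normalIn {W M : Subgroup G} (hW : NormalIn W M) : M ≤ Subgroup.normalizer (W : Set G) := by
  intro m hm
  rw [Subgroup.mem_normalizer_iff]
  intro h
  constructor
  · exact fun hh => hW.2 m hm h hh
  · intro hh
    have := hW.2 m⁻¹ (inv_mem hm) _ hh
    have he : m⁻¹ * (m * h * m⁻¹) * m⁻¹⁻¹ = h := by group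
    rwa [he] at this

/-- Existence of a largest normal `p`-subgroup of `M` (the `p`-core). -/
lemma exists_pcore (M : Subgroup G) :
    ∃ O : Subgroup G, NormalIn O M ∧ IsPGroup p O ∧
      ∀ W : Subgroup G, NormalIn W M → IsPGroup p W → W ≤ O := by
  haveI : Finite (Subgroup G) :=
    Finite.of_injective (fun H : Subgroup G => (H : Set G)) SetLike.coe_injective
  set S : Set (Subgroup G) := {W | NormalIn W M ∧ IsPGroup p W} with hSdef
  have hbot : (⊥ : Subgroup G) ∈ S := by
    refine ⟨⟨bot_le, ?_⟩, IsPGroup.of_bot⟩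
    intro k _ h hh
    simp only [Subgroup.mem_bot] at *
    simp [hh]
  have hsup : ∀ W1 ∈ S, ∀ W2 ∈ S, W1 ⊔ W2 ∈ S := by
    rintro W1 ⟨hW1n, hW1p⟩ W2 ⟨hW2n, hW2p⟩
    refine ⟨⟨sup_le hW1n.1 hW2n.1, ?_⟩, ?_⟩
    · intro k hk h hh
      have : k * h * k⁻¹ ∈ (W1 ⊔ W2).map (MulAut.conj k).toMonoidHom :=
        ⟨h, hh, rfl⟩
      rw [Subgroup.map_sup] at this
      exact sup_le ((conj_mem_of_normalIn hW1n hk).trans le_sup_left)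
        ((conj_mem_of_normalIn hW2n hk).trans le_sup_right) this
    · exact IsPGroup.to_sup_of_normal_right' hW1p hW2p
        (hW1n.1.trans (le_normalizer_of_normalIn hW2n))
  obtain ⟨O, hOS, hOmax⟩ := Set.Finite.exists_maximalFor id S (Set.toFinite S) ⟨⊥, hbot⟩
  refine ⟨O, hOS.1, hOS.2, ?_⟩
  intro W hWn hWp
  have hmem := hsup W ⟨hWn, hWp⟩ O hOS
  have := hOmax hmem (le_sup_right (a := W))
  simp only [id] at this
  exact le_sup_left.trans this.ge

/-- A subnormal p-subgroup is contained in a normal p-subgroup. -/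
lemma subnormal_pgroup_le_normal_pgroup :
    ∀ (n : ℕ) (c : ℕ → Subgroup G), (∀ i < n, NormalIn (c i) (c (i + 1))) →
      IsPGroup p (c 0) → ∃ W : Subgroup G, c 0 ≤ W ∧ NormalIn W (c n) ∧ IsPGroup p W := by
  intro n
  induction n with
  | zero => exact fun c _ hp => ⟨c 0, le_rfl, normalIn_refl _, hp⟩
  | succ n ih =>
    intro c hc hp
    obtain ⟨W, hW1, hW2, hW3⟩ := ih c (fun i hi => hc i (by omega)) hp
    obtain ⟨O, hOn, hOp, hOmax⟩ := exists_pcore (p := p) (c n)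
    have hMN : NormalIn (c n) (c (n+1)) := hc n (by omega)
    refine ⟨O, hW1.trans (hOmax W hW2 hW3), ⟨hOn.1.trans hMN.1, ?_⟩, hOp⟩
    intro k hk h hh
    -- conjugate of O is a normal p-subgroup of c n
    have hconj : O.map (MulAut.conj k).toMonoidHom ≤ O := by
      apply hOmax
      · constructor
        · rintro _ ⟨o, ho, rfl⟩
          exact hMN.2 k hk o (hOn.1 ho)
        · rintro m hm _ ⟨o, ho, rfl⟩
          have hm' : k⁻¹ * m * k ∈ c n := by
            have := hMN.2 k⁻¹ (inv_mem hk) m hm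
            simpa using this
          refine ⟨(k⁻¹ * m * k) * o * (k⁻¹ * m * k)⁻¹, hOn.2 _ hm' o ho, ?_⟩
          simp only [MulEquiv.coe_toMonoidHom, MulAut.conj_apply]
          group
      · exact hOp.map _
    exact hconj ⟨h, hh, rfl⟩

end PCore

theorem sylow_subnormal_of_cyclic_primary_subnormal {G : Type*} [Group G] [Finite G]
    (N : Subgroup G) (hN : N.Normal)
    (h : ∀ x : G, (∃ q n : ℕ, Nat.Prime q ∧ orderOf x = q ^ n) →
      SubnormalIn (Subgroup.zpowers x) (Subgroup.zpowers x ⊔ N)) :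
    ∀ (p : ℕ) [Fact p.Prime] (P : Sylow p G),
      SubnormalIn (P : Subgroup G) ((P : Subgroup G) ⊔ N) := by
  intro p hp P
  set H : Subgroup G := (P : Subgroup G) ⊔ N with hHdef
  haveI hN' : (N.subgroupOf H).Normal := hN.subgroupOf H
  have hPH : (P : Subgroup G) ≤ H := le_sup_left
  have hNH : N ≤ H := le_sup_right
  -- the quotient H / N' is a p-group
  have hsurj : Function.Surjective
      ((QuotientGroup.mk' (N.subgroupOf H)).comp (Subgroup.inclusion hPH)) := by
    intro q
    obtain ⟨y, rfl⟩ := QuotientGroup.mk'_surjective (N.subgroupOf H) q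
    have hy : (y : G) ∈ (((P : Subgroup G) : Set G)) * (N : Set G) := by
      rw [← Subgroup.mul_normal]; exact y.2
    obtain ⟨a, ha, b, hb, hab⟩ := hy
    refine ⟨⟨a, ha⟩, ?_⟩
    simp only [MonoidHom.comp_apply, QuotientGroup.mk'_apply, QuotientGroup.eq]
    rw [Subgroup.mem_subgroupOf]
    have hcoe : (((Subgroup.inclusion hPH ⟨a, ha⟩)⁻¹ * y : ↥H) : G) = b := by
      push_cast
      rw [Subgroup.coe_inclusion]
      simp only []
      rw [← hab]
      group
    rw [hcoe]
    exact hb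
  have hPQ : IsPGroup p (↥H ⧸ N.subgroupOf H) := IsPGroup.of_surjective P.isPGroup' _ hsurj
  have hnil : Group.IsNilpotent (↥H ⧸ N.subgroupOf H) := hPQ.isNilpotent
  have key : ∀ x : G, x ∈ (P : Subgroup G) → SubnormalIn (Subgroup.zpowers x) H := by
    intro x hx
    obtain ⟨k, hk⟩ := IsPGroup.iff_orderOf.mp P.isPGroup' ⟨x, hx⟩
    rw [Subgroup.orderOf_mk] at hk
    have h1 : SubnormalIn (Subgroup.zpowers x) (Subgroup.zpowers x ⊔ N) :=
      h x ⟨p, k, hp.out, hk⟩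
    have h2 := subnormalIn_top_of_nilpotent hnil
      (((Subgroup.zpowers x).subgroupOf H).map (QuotientGroup.mk' (N.subgroupOf H)))
    have h3 := subnormalIn_comap (QuotientGroup.mk' (N.subgroupOf H)) h2
    rw [Subgroup.comap_map_eq, QuotientGroup.ker_mk', Subgroup.comap_top] at h3
    have h4 := subnormalIn_map H.subtype h3
    rw [Subgroup.map_sup, Subgroup.subgroupOf_map_subtype, Subgroup.subgroupOf_map_subtype,
      ← MonoidHom.range_eq_map, Subgroup.range_subtype] at h4
    have hxH : Subgroup.zpowers x ≤ H := Subgroup.zpowers_le.mpr (hPH hx)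
    rw [inf_of_le_left hxH, inf_of_le_left hNH] at h4
    exact subnormalIn_trans h1 h4
  obtain ⟨O, hOn, hOp, hOmax⟩ := exists_pcore (p := p) H
  have hPle : (P : Subgroup G) ≤ O := by
    intro x hx
    obtain ⟨n, c, hc0, hcn, hc⟩ := key x hx
    have hp0 : IsPGroup p (c 0) := by
      rw [hc0]
      exact P.isPGroup'.to_le (Subgroup.zpowers_le.mpr hx)
    obtain ⟨W, hW1, hW2, hW3⟩ := subnormal_pgroup_le_normal_pgroup n c hc hp0
    rw [hcn] at hW2
    refine (hOmax W hW2 hW3) (hW1 ?_)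
    rw [hc0]
    exact Subgroup.mem_zpowers x
  have hOP : O = (P : Subgroup G) := P.3 hOp hPle
  rw [hOP] at hOn
  exact subnormalIn_of_normalIn hOn
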